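/- Let B ≤ V and E ≤ W be subspaces with B ∩ ker T = {0} and W = E ⊕ T(B). Then there exists a unique outer inverse G of T with image G = B and kernel G = E. -/

import Mathlib

theorem exists_unique_outer_inverse {F V W : Type*} [Field F]
    [AddCommGroup V] [Module F V] [AddCommGroup W] [Module F W]
    (T : V →ₗ[F] W) (B : Submodule F V) (E : Submodule F W)
    (hB : B ⊓ LinearMap.ker T = ⊥)
    (hdisj : Disjoint E (Submodule.map T B))
    (hsum : E ⊔ Submodule.map T B = ⊤) :
    ∃! G : W →ₗ[F] V, G ∘ₗ T ∘ₗ G = G ∧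
      LinearMap.range G = B ∧ LinearMap.ker G = E := by
  have hcompl : IsCompl (Submodule.map T B) E :=
    ⟨hdisj.symm, by rw [codisjoint_iff, sup_comm]; exact hsum⟩
  set π := (Submodule.map T B).linearProjOfIsCompl E hcompl with hπ
  -- the restriction of T to B, as a map B → map T B
  have hmem : ∀ x : B, T x ∈ Submodule.map T B := fun x => Submodule.mem_map_of_mem x.2
  set f : B →ₗ[F] Submodule.map T B := (T.domRestrict B).codRestrict _ hmem with hf
  have hbij : Function.Bijective f := by
    constructor
    · intro x y h
      have hxy : (x : V) - y ∈ B ⊓ LinearMap.ker T := by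
        refine ⟨sub_mem x.2 y.2, ?_⟩
        have : T x = T y := congrArg Subtype.val h
        simp [LinearMap.mem_ker, map_sub, this]
      rw [hB] at hxy
      exact Subtype.ext (sub_eq_zero.mp hxy)
    · rintro ⟨w, b, hb, rfl⟩
      exact ⟨⟨b, hb⟩, rfl⟩
  set e := LinearEquiv.ofBijective f hbij with he
  set G : W →ₗ[F] V := B.subtype ∘ₗ (e.symm : Submodule.map T B →ₗ[F] B) ∘ₗ π with hG
  have hGmem : ∀ w, G w ∈ B := fun w => (e.symm (π w)).2
  have hGT : ∀ b ∈ B, G (T b) = b := by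
    intro b hb
    have h1 : π (T b) = ⟨T b, Submodule.mem_map_of_mem hb⟩ :=
      Submodule.linearProjOfIsCompl_apply_left hcompl ⟨T b, Submodule.mem_map_of_mem hb⟩
    have h2 : e ⟨b, hb⟩ = ⟨T b, Submodule.mem_map_of_mem hb⟩ := rfl
    simp only [hG, LinearMap.comp_apply, h1, ← h2, LinearEquiv.symm_apply_apply,
      Submodule.subtype_apply]
    simp
  have hGE : ∀ w ∈ E, G w = 0 := by
    intro w hw
    simp only [hG, LinearMap.comp_apply]
    rw [show π w = 0 from Submodule.linearProjOfIsCompl_apply_right hcompl ⟨w, hw⟩]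
    simp
  refine ⟨G, ⟨?_, ?_, ?_⟩, ?_⟩
  · ext w
    exact hGT _ (hGmem w)
  · apply le_antisymm
    · rintro _ ⟨w, rfl⟩; exact hGmem w
    · intro b hb; exact ⟨T b, hGT b hb⟩
  · apply le_antisymm
    · intro w hw
      have hw' : G w = 0 := hw
      -- π w = 0, so w ∈ E
      have : (e.symm (π w) : V) = 0 := hw'
      have h0 : e.symm (π w) = 0 := Subtype.ext this
      have hπ0 : π w = 0 := by
        have := congrArg e h0
        simpa using this
      have := Submodule.linearProjOfIsCompl_ker hcompl (q := E)
      -- ker π = E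
      rw [LinearMap.mem_ker] at *
      have hker : LinearMap.ker π = E := Submodule.linearProjOfIsCompl_ker hcompl
      rw [← hker]; exact hπ0
    · intro w hw; exact hGE w hw
  · rintro G' ⟨hout, hrange, hker⟩
    -- G' agrees with G on E and on map T B, which span W
    have key : ∀ b ∈ B, G' (T b) = b := by
      intro b hb
      obtain ⟨w, rfl⟩ : ∃ w, G' w = b := by rw [← hrange] at hb; exact hb
      have := congrFun (congrArg DFunLike.coe hout) w
      simpa using this
    ext w
    obtain ⟨y, hy, z, hz, rfl⟩ : ∃ y ∈ E, ∃ z ∈ Submodule.map T B, y + z = w := by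
      have : w ∈ E ⊔ Submodule.map T B := hsum ▸ Submodule.mem_top
      exact Submodule.mem_sup.mp this
    obtain ⟨b, hb, rfl⟩ := hz
    have hG'y : G' y = 0 := by rw [← LinearMap.mem_ker, hker]; exact hy
    rw [map_add, map_add, hG'y, hGE y hy, key b hb, hGT b hb]
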